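/- Generic Bregman–Fenchel-Young decomposition for the Sinkhorn negentropy: assume the kernel matrix K = (exp(−c_{ij}/2))_{i,j} is positive definite. For every α ∈ △^d and f ∈ ℝ^d, D_Ω(α, g-softmax(f)) = ℓ_Ω(α, f) + ⟨f − ∇Ω(g-softmax(f)), α − g-softmax(f)⟩. -/

import Mathlib

open Finset Real Filter

noncomputable section

/-- The probability simplex in `ℝ^d`. -/
def simplexS (d : ℕ) : Set (Fin d → ℝ) := stdSimplex ℝ (Fin d)

/-- Transport plans between `α` and `β`: nonnegative matrices with prescribed marginals,
supported where `α i * β j > 0`. -/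
def couplings {d : ℕ} (α β : Fin d → ℝ) : Set (Matrix (Fin d) (Fin d) ℝ) :=
  {p | (∀ i j, 0 ≤ p i j) ∧ (∀ i, ∑ j, p i j = α i) ∧ (∀ j, ∑ i, p i j = β j) ∧
    ∀ i j, α i * β j = 0 → p i j = 0}

/-- The entropy-regularized transport cost of a plan `p` (with the convention `0 log 0 = 0`,
which holds automatically since `Real.log 0 = 0`). -/
def OTcost {d : ℕ} (C : Matrix (Fin d) (Fin d) ℝ) (ε : ℝ) (α β : Fin d → ℝ)
    (p : Matrix (Fin d) (Fin d) ℝ) : ℝ :=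
  (∑ i, ∑ j, p i j * C i j) + ε * ∑ i, ∑ j, p i j * Real.log (p i j / (α i * β j))

/-- Entropy-regularized optimal transport cost `OT_{C,ε}(α,β)`. -/
def OT {d : ℕ} (C : Matrix (Fin d) (Fin d) ℝ) (ε : ℝ) (α β : Fin d → ℝ) : ℝ :=
  sInf (OTcost C ε α β '' couplings α β)

/-- The Sinkhorn negentropy `Ω_C(α) = -(1/2) OT_{C,2}(α,α)`. -/
def Omega {d : ℕ} (C : Matrix (Fin d) (Fin d) ℝ) (α : Fin d → ℝ) : ℝ :=
  -(1 / 2) * OT C 2 α α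

open scoped Classical

/-- `Φ_C(α,f) = Σ_{i,j} α_i α_j exp(-(f_i + f_j + c_{ij})/2)`. -/
def Phi {d : ℕ} (C : Matrix (Fin d) (Fin d) ℝ) (α f : Fin d → ℝ) : ℝ :=
  ∑ i, ∑ j, α i * α j * Real.exp (-(f i + f j + C i j) / 2)

/-- The geometric log-sum-exp `Ω_C^*(f) = -log min_{α ∈ △^d} Φ_C(α, f)`. -/
def OmegaStar {d : ℕ} (C : Matrix (Fin d) (Fin d) ℝ) (f : Fin d → ℝ) : ℝ :=
  -Real.log (sInf ((fun α => Phi C α f) '' simplexS d))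

/-- The geometric softmax: the (unique, when the kernel is positive definite) minimizer of
`Φ_C(·, f)` over the simplex. -/
def gsoftmax {d : ℕ} (C : Matrix (Fin d) (Fin d) ℝ) (f : Fin d → ℝ) : Fin d → ℝ :=
  if h : ∃ α ∈ simplexS d, IsMinOn (fun β => Phi C β f) (simplexS d) α
  then h.choose else fun _ => 0

/-- The soft C-transform `T(f,α)_i = -2 log Σ_j α_j exp((f_j - c_{ij})/2)`. -/
def Tsoft {d : ℕ} (C : Matrix (Fin d) (Fin d) ℝ) (f α : Fin d → ℝ) : Fin d → ℝ :=
  fun i => -2 * Real.log (∑ j, α j * Real.exp ((f j - C i j) / 2))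

/-- `f` is the symmetric Sinkhorn potential of `α`: `-f = T(-f, α)`. -/
def IsSinkhornPotential {d : ℕ} (C : Matrix (Fin d) (Fin d) ℝ) (α f : Fin d → ℝ) : Prop :=
  -f = Tsoft C (-f) α

/-- The symmetric Sinkhorn potential `∇Ω(α)`: the (unique, when the kernel is positive
definite) `f` with `-f = T(-f, α)`. -/
def gradOmega {d : ℕ} (C : Matrix (Fin d) (Fin d) ℝ) (α : Fin d → ℝ) : Fin d → ℝ :=
  if h : ∃ f : Fin d → ℝ, IsSinkhornPotential C α f then h.choose else fun _ => 0

/-- The extrapolation `f^E = -T(-(f - Ω_C^*(f)·1), g-softmax(f)) + Ω_C^*(f)·1`. -/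
def extrap {d : ℕ} (C : Matrix (Fin d) (Fin d) ℝ) (f : Fin d → ℝ) : Fin d → ℝ :=
  fun i => -(Tsoft C (fun j => -(f j - OmegaStar C f)) (gsoftmax C f) i) + OmegaStar C f

/-- The kernel matrix `K = (exp(-c_{ij}/2))_{ij}`. -/
def kernelK {d : ℕ} (C : Matrix (Fin d) (Fin d) ℝ) : Matrix (Fin d) (Fin d) ℝ :=
  Matrix.of fun i j => Real.exp (-(C i j) / 2)

/-- The Fenchel-Young loss `ℓ_Ω(α,f) = Ω_C^*(f) + Ω_C(α) - ⟨α, f⟩`. -/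
def FYloss {d : ℕ} (C : Matrix (Fin d) (Fin d) ℝ) (α f : Fin d → ℝ) : ℝ :=
  OmegaStar C f + Omega C α - ∑ i, α i * f i

/-- The asymmetric Hausdorff (Bregman) divergence
`D_Ω(α,β) = Ω_C(α) - Ω_C(β) - ⟨∇Ω(β), α - β⟩`. -/
def DOmega {d : ℕ} (C : Matrix (Fin d) (Fin d) ℝ) (α β : Fin d → ℝ) : ℝ :=
  Omega C α - Omega C β - ∑ i, gradOmega C β i * (α i - β i)

namespace BFY

variable {d : ℕ}

lemma simplex_exists_pos {β : Fin d → ℝ} (hβ : β ∈ simplexS d) : ∃ j, 0 < β j := by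
  by_contra hc
  push_neg at hc
  have h0 : ∑ j, β j = 0 :=
    Finset.sum_eq_zero fun j _ => le_antisymm (hc j) (hβ.1 j)
  rw [hβ.2] at h0
  norm_num at h0

lemma sum_pot_pos (C : Matrix (Fin d) (Fin d) ℝ) {β : Fin d → ℝ} (hβ : β ∈ simplexS d)
    (g : Fin d → ℝ) (i : Fin d) :
    0 < ∑ j, β j * Real.exp ((-g j - C i j) / 2) := by
  obtain ⟨j0, hj0⟩ := simplex_exists_pos hβ
  refine Finset.sum_pos' (fun j _ => mul_nonneg (hβ.1 j) (Real.exp_pos _).le) ?_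
  exact ⟨j0, Finset.mem_univ _, mul_pos hj0 (Real.exp_pos _)⟩

lemma pot_eq (C : Matrix (Fin d) (Fin d) ℝ) {β g : Fin d → ℝ} (hβ : β ∈ simplexS d)
    (h : IsSinkhornPotential C β g) (i : Fin d) :
    ∑ j, β j * Real.exp ((-g j - C i j) / 2) = Real.exp (g i / 2) := by
  have h' : -g = Tsoft C (-g) β := h
  have h1 := congrFun h' i
  simp only [Pi.neg_apply, Tsoft] at h1
  have hS := sum_pot_pos C hβ g i
  have hlog : Real.log (∑ j, β j * Real.exp ((-g j - C i j) / 2)) = g i / 2 := by linarith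
  rw [← hlog, Real.exp_log hS]

lemma OTcost_eq (C : Matrix (Fin d) (Fin d) ℝ) (β : Fin d → ℝ)
    (p : Matrix (Fin d) (Fin d) ℝ) :
    OTcost C 2 β β p =
      ∑ i, ∑ j, (p i j * C i j + 2 * (p i j * Real.log (p i j / (β i * β j)))) := by
  rw [OTcost, Finset.mul_sum, ← Finset.sum_add_distrib]
  refine Finset.sum_congr rfl fun i _ => ?_
  rw [Finset.mul_sum, ← Finset.sum_add_distrib]

lemma omega_eq_inner (C : Matrix (Fin d) (Fin d) ℝ) (hCsym : C.IsSymm)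
    {β g : Fin d → ℝ} (hβ : β ∈ simplexS d) (hg : IsSinkhornPotential C β g) :
    Omega C β = ∑ i, β i * g i := by
  set q : Matrix (Fin d) (Fin d) ℝ :=
    Matrix.of fun i j => β i * β j * Real.exp (-(g i + g j + C i j) / 2) with hq
  have hqsplit : ∀ i j, q i j =
      (β i * Real.exp (-g i / 2)) * (β j * Real.exp ((-g j - C i j) / 2)) := by
    intro i j
    show β i * β j * Real.exp (-(g i + g j + C i j) / 2) = _
    rw [show -(g i + g j + C i j) / 2 = -g i / 2 + (-g j - C i j) / 2 by ring, Real.exp_add]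
    ring
  have hqsplit' : ∀ i j, q i j =
      (β j * Real.exp (-g j / 2)) * (β i * Real.exp ((-g i - C j i) / 2)) := by
    intro i j
    show β i * β j * Real.exp (-(g i + g j + C i j) / 2) = _
    rw [← hCsym.apply i j,
      show -(g i + g j + C j i) / 2 = -g j / 2 + (-g i - C j i) / 2 by ring, Real.exp_add]
    ring
  have hrow : ∀ i, ∑ j, q i j = β i := by
    intro i
    rw [Finset.sum_congr rfl fun j _ => hqsplit i j, ← Finset.mul_sum,
      pot_eq C hβ hg i, mul_assoc, ← Real.exp_add,
      show -g i / 2 + g i / 2 = 0 by ring, Real.exp_zero, mul_one]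
  have hcol : ∀ j, ∑ i, q i j = β j := by
    intro j
    rw [Finset.sum_congr rfl fun i _ => hqsplit' i j, ← Finset.mul_sum,
      pot_eq C hβ hg j, mul_assoc, ← Real.exp_add,
      show -g j / 2 + g j / 2 = 0 by ring, Real.exp_zero, mul_one]
  have hq0 : ∀ i j, β i * β j = 0 → q i j = 0 := by
    intro i j h0
    show β i * β j * _ = 0
    rw [h0, zero_mul]
  have hqmem : q ∈ couplings β β := by
    refine ⟨fun i j => ?_, hrow, hcol, hq0⟩
    exact mul_nonneg (mul_nonneg (hβ.1 i) (hβ.1 j)) (Real.exp_pos _).le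
  have hqdiv : ∀ i j, β i * β j ≠ 0 →
      q i j / (β i * β j) = Real.exp (-(g i + g j + C i j) / 2) := by
    intro i j h0
    show β i * β j * _ / (β i * β j) = _
    rw [mul_comm (β i * β j), mul_div_assoc, div_self h0, mul_one]
  have hcost : OTcost C 2 β β q = -2 * ∑ i, β i * g i := by
    have hterm : ∀ i j, q i j * C i j + 2 * (q i j * Real.log (q i j / (β i * β j)))
        = -(q i j * g i) + -(q i j * g j) := by
      intro i j
      by_cases h0 : β i * β j = 0
      · rw [hq0 i j h0]; simp
      · rw [hqdiv i j h0, Real.log_exp]; ring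
    rw [OTcost_eq, Finset.sum_congr rfl fun i _ => Finset.sum_congr rfl fun j _ => hterm i j]
    have hA : ∑ i, ∑ j, q i j * g i = ∑ i, β i * g i :=
      Finset.sum_congr rfl fun i _ => by rw [← Finset.sum_mul, hrow i]
    have hB : ∑ i, ∑ j, q i j * g j = ∑ i, β i * g i := by
      rw [Finset.sum_comm]
      exact Finset.sum_congr rfl fun j _ => by rw [← Finset.sum_mul, hcol j]
    simp only [Finset.sum_add_distrib]
    simp only [Finset.sum_neg_distrib]
    rw [hA, hB]; ring
  have hlb : ∀ p ∈ couplings β β, (-2 * ∑ i, β i * g i) ≤ OTcost C 2 β β p := by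
    rintro p ⟨hp0, hprow, hpcol, hpsupp⟩
    have hterm2 : ∀ i j, 2 * (p i j - q i j) - (p i j * g i + p i j * g j)
        ≤ p i j * C i j + 2 * (p i j * Real.log (p i j / (β i * β j))) := by
      intro i j
      by_cases h0 : β i * β j = 0
      · rw [hpsupp i j h0, hq0 i j h0]; simp
      · have hbpos : 0 < β i * β j :=
          lt_of_le_of_ne (mul_nonneg (hβ.1 i) (hβ.1 j)) (Ne.symm h0)
        have hqpos : 0 < q i j := by
          show 0 < β i * β j * _
          exact mul_pos hbpos (Real.exp_pos _)
        rcases eq_or_lt_of_le (hp0 i j) with hpe | hppos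
        · rw [← hpe]
          simp
          nlinarith [hqpos]
        · have hlog : Real.log (p i j / (β i * β j)) =
              Real.log (p i j / q i j) + (-(g i + g j + C i j) / 2) := by
            have hd : p i j / (β i * β j) = (p i j / q i j) * (q i j / (β i * β j)) := by
              field_simp
            rw [hd, Real.log_mul (by positivity) (by positivity), hqdiv i j h0, Real.log_exp]
          have hgibbs : p i j - q i j ≤ p i j * Real.log (p i j / q i j) := by
            have h1 : Real.log (q i j / p i j) ≤ q i j / p i j - 1 :=
              Real.log_le_sub_one_of_pos (by positivity)
            have h2 : Real.log (q i j / p i j) = -Real.log (p i j / q i j) := by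
              rw [← Real.log_inv]
              congr 1
              field_simp
            rw [h2] at h1
            have h3 : 1 - q i j / p i j ≤ Real.log (p i j / q i j) := by linarith
            calc p i j - q i j = p i j * (1 - q i j / p i j) := by field_simp
            _ ≤ p i j * Real.log (p i j / q i j) := mul_le_mul_of_nonneg_left h3 hppos.le
          rw [hlog]
          nlinarith [hgibbs]
    have hsump : ∑ i, ∑ j, p i j = 1 := by
      rw [Finset.sum_congr rfl fun i _ => hprow i]; exact hβ.2
    have hsumq : ∑ i, ∑ j, q i j = 1 := by
      rw [Finset.sum_congr rfl fun i _ => hrow i]; exact hβ.2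
    have hpgi : ∑ i, ∑ j, p i j * g i = ∑ i, β i * g i :=
      Finset.sum_congr rfl fun i _ => by rw [← Finset.sum_mul, hprow i]
    have hpgj : ∑ i, ∑ j, p i j * g j = ∑ i, β i * g i := by
      rw [Finset.sum_comm]
      exact Finset.sum_congr rfl fun j _ => by rw [← Finset.sum_mul, hpcol j]
    have split : (∑ i, ∑ j, (2:ℝ) * p i j) - (∑ i, ∑ j, (2:ℝ) * q i j)
          - (∑ i, ∑ j, p i j * g i) - (∑ i, ∑ j, p i j * g j)
        = ∑ i, ∑ j, (2 * (p i j - q i j) - (p i j * g i + p i j * g j)) := by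
      rw [← Finset.sum_sub_distrib, ← Finset.sum_sub_distrib, ← Finset.sum_sub_distrib]
      refine Finset.sum_congr rfl fun i _ => ?_
      rw [← Finset.sum_sub_distrib, ← Finset.sum_sub_distrib, ← Finset.sum_sub_distrib]
      exact Finset.sum_congr rfl fun j _ => by ring
    have c1 : ∑ i, ∑ j, (2:ℝ) * p i j = 2 := by
      simp_rw [← Finset.mul_sum]
      rw [hsump, mul_one]
    have c2 : ∑ i, ∑ j, (2:ℝ) * q i j = 2 := by
      simp_rw [← Finset.mul_sum]
      rw [hsumq, mul_one]
    have key : ∑ i, ∑ j, (2 * (p i j - q i j) - (p i j * g i + p i j * g j))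
        = -2 * ∑ i, β i * g i := by
      rw [← split, c1, c2, hpgi, hpgj]; ring
    calc -2 * ∑ i, β i * g i
        = ∑ i, ∑ j, (2 * (p i j - q i j) - (p i j * g i + p i j * g j)) := key.symm
      _ ≤ ∑ i, ∑ j, (p i j * C i j + 2 * (p i j * Real.log (p i j / (β i * β j)))) :=
          Finset.sum_le_sum fun i _ => Finset.sum_le_sum fun j _ => hterm2 i j
      _ = OTcost C 2 β β p := (OTcost_eq C β p).symm
  have hleast : IsLeast (OTcost C 2 β β '' couplings β β) (-2 * ∑ i, β i * g i) := by
    constructor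
    · exact ⟨q, hqmem, hcost⟩
    · rintro y ⟨p, hp, rfl⟩
      exact hlb p hp
  have hOT : OT C 2 β β = -2 * ∑ i, β i * g i := hleast.csInf_eq
  rw [Omega, hOT]; ring

lemma S_ge (C : Matrix (Fin d) (Fin d) ℝ) (hCsym : C.IsSymm) (f : Fin d → ℝ)
    {β : Fin d → ℝ} (hβ : β ∈ simplexS d)
    (hmin : IsMinOn (fun b => Phi C b f) (simplexS d) β) (i : Fin d) :
    Phi C β f ≤ ∑ j, β j * Real.exp (-(f i + f j + C i j) / 2) := by
  set S : Fin d → ℝ := fun a => ∑ b, β b * Real.exp (-(f a + f b + C a b) / 2) with hSdef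
  set m := Phi C β f with hmdef
  show m ≤ S i
  set A := m - 2 * S i + Real.exp (-(f i + f i + C i i) / 2) with hAdef
  have hm : m = ∑ a, β a * S a := by
    rw [hmdef, hSdef]
    simp only [Phi]
    refine Finset.sum_congr rfl fun a _ => ?_
    rw [Finset.mul_sum]
    exact Finset.sum_congr rfl fun b _ => mul_assoc _ _ _
  have hsymsum : ∑ a, β a * Real.exp (-(f a + f i + C a i) / 2) = S i := by
    rw [hSdef]
    refine Finset.sum_congr rfl fun a _ => ?_
    rw [hCsym.apply i a]
    congr 2
    ring
  have key : ∀ t ∈ Set.Ioo (0:ℝ) 1, -(t * A) ≤ 2 * S i - 2 * m := by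
    intro t ht
    set x : Fin d → ℝ := fun l => (1 - t) * β l + t * (if l = i then 1 else 0) with hxdef
    have hxmem : x ∈ simplexS d := by
      constructor
      · intro l
        refine add_nonneg (mul_nonneg (by linarith [ht.2]) (hβ.1 l)) ?_
        refine mul_nonneg ht.1.le ?_
        split <;> norm_num
      · show ∑ l, ((1 - t) * β l + t * (if l = i then 1 else 0)) = 1
        rw [Finset.sum_add_distrib, ← Finset.mul_sum, ← Finset.mul_sum, hβ.2]
        simp [Finset.sum_ite_eq']
    have hinner : ∀ a, ∑ b, x b * Real.exp (-(f a + f b + C a b) / 2)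
        = (1 - t) * S a + t * Real.exp (-(f a + f i + C a i) / 2) := by
      intro a
      have e1 : ∀ b : Fin d,
          x b * Real.exp (-(f a + f b + C a b) / 2)
          = (1 - t) * (β b * Real.exp (-(f a + f b + C a b) / 2))
            + t * (if b = i then Real.exp (-(f a + f b + C a b) / 2) else 0) := by
        intro b
        rw [hxdef]
        by_cases hb : b = i
        · simp only [if_pos hb]; ring
        · simp only [if_neg hb]; ring
      rw [Finset.sum_congr rfl fun b _ => e1 b, Finset.sum_add_distrib,
        ← Finset.mul_sum, ← Finset.mul_sum]
      simp [Finset.sum_ite_eq', hSdef]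
    have hphix : Phi C x f = (1 - t)^2 * m + 2 * (t * (1 - t)) * S i
        + t^2 * Real.exp (-(f i + f i + C i i) / 2) := by
      have step1 : Phi C x f
          = ∑ a, x a * ((1 - t) * S a + t * Real.exp (-(f a + f i + C a i) / 2)) := by
        simp only [Phi]
        refine Finset.sum_congr rfl fun a _ => ?_
        rw [← hinner a, Finset.mul_sum]
        exact Finset.sum_congr rfl fun b _ => mul_assoc _ _ _
      have e2 : ∀ a : Fin d,
          x a * ((1 - t) * S a + t * Real.exp (-(f a + f i + C a i) / 2))
          = (1 - t)^2 * (β a * S a)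
            + (t * (1 - t)) * (β a * Real.exp (-(f a + f i + C a i) / 2))
            + (t * (1 - t)) * (if a = i then S a else 0)
            + t^2 * (if a = i then Real.exp (-(f a + f i + C a i) / 2) else 0) := by
        intro a
        rw [hxdef]
        by_cases ha : a = i
        · simp only [if_pos ha]; ring
        · simp only [if_neg ha]; ring
      rw [step1, Finset.sum_congr rfl fun a _ => e2 a, Finset.sum_add_distrib,
        Finset.sum_add_distrib, Finset.sum_add_distrib,
        ← Finset.mul_sum, ← Finset.mul_sum, ← Finset.mul_sum, ← Finset.mul_sum]
      simp only [Finset.sum_ite_eq', Finset.mem_univ, if_true]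
      rw [← hm, hsymsum]
      rw [hCsym.apply i i]
      ring
    have hmin' : m ≤ Phi C x f := (isMinOn_iff.mp hmin) x hxmem
    rw [hphix] at hmin'
    have h4 : 0 ≤ t * ((2 * S i - 2 * m) + t * A) := by
      rw [hAdef]; nlinarith [hmin']
    nlinarith [h4, ht.1]
  have hlim : Filter.Tendsto (fun t : ℝ => -(t * A)) (nhdsWithin 0 (Set.Ioi 0)) (nhds 0) := by
    have h5 : Filter.Tendsto (fun t : ℝ => -(t * A)) (nhds 0) (nhds (-(0 * A))) :=
      ((continuous_id.mul continuous_const).neg.tendsto 0)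
    simpa using h5.mono_left nhdsWithin_le_nhds
  have h0le : (0:ℝ) ≤ 2 * S i - 2 * m :=
    le_of_tendsto hlim (Filter.eventually_of_mem
      (Ioo_mem_nhdsGT_of_mem (by constructor <;> norm_num : (0:ℝ) ∈ Set.Ico 0 1)) key)
  linarith

lemma phi_pos (C : Matrix (Fin d) (Fin d) ℝ) (f : Fin d → ℝ)
    {β : Fin d → ℝ} (hβ : β ∈ simplexS d) : 0 < Phi C β f := by
  obtain ⟨j0, hj0⟩ := simplex_exists_pos hβ
  refine Finset.sum_pos' (fun a _ => Finset.sum_nonneg fun b _ =>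
    mul_nonneg (mul_nonneg (hβ.1 a) (hβ.1 b)) (Real.exp_pos _).le) ?_
  refine ⟨j0, Finset.mem_univ _, Finset.sum_pos' (fun b _ =>
    mul_nonneg (mul_nonneg (hβ.1 j0) (hβ.1 b)) (Real.exp_pos _).le) ?_⟩
  exact ⟨j0, Finset.mem_univ _, mul_pos (mul_pos hj0 hj0) (Real.exp_pos _)⟩

lemma S_eq (C : Matrix (Fin d) (Fin d) ℝ) (hCsym : C.IsSymm) (f : Fin d → ℝ)
    {β : Fin d → ℝ} (hβ : β ∈ simplexS d)
    (hmin : IsMinOn (fun b => Phi C b f) (simplexS d) β) {k : Fin d} (hk : 0 < β k) :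
    ∑ j, β j * Real.exp (-(f k + f j + C k j) / 2) = Phi C β f := by
  have hm : Phi C β f = ∑ a, β a * (∑ b, β b * Real.exp (-(f a + f b + C a b) / 2)) := by
    simp only [Phi]
    refine Finset.sum_congr rfl fun a _ => ?_
    rw [Finset.mul_sum]
    exact Finset.sum_congr rfl fun b _ => mul_assoc _ _ _
  have hzero : ∑ a, β a * ((∑ b, β b * Real.exp (-(f a + f b + C a b) / 2)) - Phi C β f)
      = 0 := by
    rw [Finset.sum_congr rfl fun a _ => mul_sub (β a) _ _, Finset.sum_sub_distrib, ← hm,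
      ← Finset.sum_mul, hβ.2, one_mul, sub_self]
  have hterm := (Finset.sum_eq_zero_iff_of_nonneg (fun a _ =>
    mul_nonneg (hβ.1 a) (by linarith [S_ge C hCsym f hβ hmin a]))).mp hzero k
    (Finset.mem_univ k)
  rcases mul_eq_zero.mp hterm with h | h
  · exact absurd h hk.ne'
  · linarith [S_ge C hCsym f hβ hmin k, h]

lemma pot_of_min (C : Matrix (Fin d) (Fin d) ℝ) (hCsym : C.IsSymm) (f : Fin d → ℝ)
    {β : Fin d → ℝ} (hβ : β ∈ simplexS d)
    (hmin : IsMinOn (fun b => Phi C b f) (simplexS d) β) :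
    ∃ g : Fin d → ℝ, IsSinkhornPotential C β g ∧
      ∀ k, 0 < β k → g k = f k + Real.log (Phi C β f) := by
  set m := Phi C β f with hmdef
  have hmpos : 0 < m := phi_pos C f hβ
  set g : Fin d → ℝ :=
    fun i => 2 * Real.log (∑ j, β j * Real.exp ((-(f j + Real.log m) - C i j) / 2))
    with hgdef
  have hWpos : ∀ i, 0 < ∑ j, β j * Real.exp ((-(f j + Real.log m) - C i j) / 2) := by
    intro i
    obtain ⟨j0, hj0⟩ := simplex_exists_pos hβ
    refine Finset.sum_pos' (fun j _ => mul_nonneg (hβ.1 j) (Real.exp_pos _).le) ?_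
    exact ⟨j0, Finset.mem_univ _, mul_pos hj0 (Real.exp_pos _)⟩
  have hgk : ∀ k, 0 < β k → g k = f k + Real.log m := by
    intro k hk
    have hW : ∑ j, β j * Real.exp ((-(f j + Real.log m) - C k j) / 2)
        = Real.exp ((f k + Real.log m) / 2) := by
      have e1 : ∀ j : Fin d, β j * Real.exp ((-(f j + Real.log m) - C k j) / 2)
          = Real.exp ((f k - Real.log m) / 2)
            * (β j * Real.exp (-(f k + f j + C k j) / 2)) := by
        intro j
        rw [← mul_assoc, mul_comm (Real.exp _) (β j), mul_assoc, ← Real.exp_add]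
        congr 2
        ring
      rw [Finset.sum_congr rfl fun j _ => e1 j, ← Finset.mul_sum,
        S_eq C hCsym f hβ hmin hk, ← hmdef]
      rw [show m = Real.exp (Real.log m) from (Real.exp_log hmpos).symm, ← Real.exp_add]
      congr 1
      rw [Real.log_exp]
      ring
    rw [hgdef]
    show 2 * Real.log _ = _
    rw [hW, Real.log_exp]
    ring
  refine ⟨g, ?_, hgk⟩
  show -g = Tsoft C (-g) β
  funext i
  have hsum : ∑ j, β j * Real.exp (((-g) j - C i j) / 2)
      = ∑ j, β j * Real.exp ((-(f j + Real.log m) - C i j) / 2) := by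
    refine Finset.sum_congr rfl fun j _ => ?_
    rcases eq_or_lt_of_le (hβ.1 j) with h | h
    · rw [← h, zero_mul, zero_mul]
    · rw [Pi.neg_apply, hgk j h]
  show -g i = -2 * Real.log (∑ j, β j * Real.exp (((-g) j - C i j) / 2))
  rw [hsum, hgdef]
  show -(2 * Real.log _) = _
  ring
lemma pot_eq' (C : Matrix (Fin d) (Fin d) ℝ) {β g : Fin d → ℝ} (hβ : β ∈ simplexS d)
    (h : IsSinkhornPotential C β g) (i : Fin d) :
    Real.exp (-g i / 2) * ∑ j, β j * Real.exp (-C i j / 2) * Real.exp (-g j / 2) = 1 := by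
  have e : ∀ j : Fin d, β j * Real.exp (-C i j / 2) * Real.exp (-g j / 2)
      = β j * Real.exp ((-g j - C i j) / 2) := by
    intro j
    rw [mul_assoc, ← Real.exp_add]
    congr 2
    ring
  rw [Finset.sum_congr rfl fun j _ => e j, pot_eq C hβ h i, ← Real.exp_add,
    show -g i / 2 + g i / 2 = 0 by ring, Real.exp_zero]

lemma pot_unique (C : Matrix (Fin d) (Fin d) ℝ) {β g₁ g₂ : Fin d → ℝ}
    (hβ : β ∈ simplexS d) (h1 : IsSinkhornPotential C β g₁)
    (h2 : IsSinkhornPotential C β g₂) {i : Fin d} (hi : 0 < β i) : g₁ i = g₂ i := by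
  classical
  set s : Fin d → ℝ := fun l => Real.exp (-g₁ l / 2) with hsdef
  set t : Fin d → ℝ := fun l => Real.exp (-g₂ l / 2) with htdef
  have hspos : ∀ l, 0 < s l := fun l => Real.exp_pos _
  have htpos : ∀ l, 0 < t l := fun l => Real.exp_pos _
  have hs : ∀ l, s l * ∑ j, β j * Real.exp (-C l j / 2) * s j = 1 :=
    fun l => pot_eq' C hβ h1 l
  have ht : ∀ l, t l * ∑ j, β j * Real.exp (-C l j / 2) * t j = 1 :=
    fun l => pot_eq' C hβ h2 l
  set D : Finset (Fin d) := Finset.univ.filter (fun l => 0 < β l) with hDdef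
  have hiD : i ∈ D := by simp [hDdef, hi]
  obtain ⟨i1, hi1D, hmax⟩ := D.exists_max_image (fun l => s l / t l) ⟨i, hiD⟩
  obtain ⟨i2, hi2D, hmin2⟩ := D.exists_min_image (fun l => s l / t l) ⟨i, hiD⟩
  have hβD : ∀ l ∈ D, 0 < β l := fun l hl => (Finset.mem_filter.mp hl).2
  set M := s i1 / t i1 with hM
  set L := s i2 / t i2 with hL
  have hMpos : 0 < M := div_pos (hspos i1) (htpos i1)
  have hLpos : 0 < L := div_pos (hspos i2) (htpos i2)
  have hterm_ub : ∀ l j, β j * Real.exp (-C l j / 2) * s j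
      ≤ M * (β j * Real.exp (-C l j / 2) * t j) := by
    intro l j
    rcases eq_or_lt_of_le (hβ.1 j) with h | h
    · rw [← h]; simp
    · have hjD : j ∈ D := by simp [hDdef, h]
      have hsj : s j ≤ M * t j := (div_le_iff₀ (htpos j)).mp (hmax j hjD)
      have hc : 0 ≤ β j * Real.exp (-C l j / 2) :=
        mul_nonneg (hβ.1 j) (Real.exp_pos _).le
      calc β j * Real.exp (-C l j / 2) * s j
          ≤ β j * Real.exp (-C l j / 2) * (M * t j) := mul_le_mul_of_nonneg_left hsj hc
        _ = M * (β j * Real.exp (-C l j / 2) * t j) := by ring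
  have hterm_lb : ∀ l j, L * (β j * Real.exp (-C l j / 2) * t j)
      ≤ β j * Real.exp (-C l j / 2) * s j := by
    intro l j
    rcases eq_or_lt_of_le (hβ.1 j) with h | h
    · rw [← h]; simp
    · have hjD : j ∈ D := by simp [hDdef, h]
      have hsj : L * t j ≤ s j := (le_div_iff₀ (htpos j)).mp (hmin2 j hjD)
      have hc : 0 ≤ β j * Real.exp (-C l j / 2) :=
        mul_nonneg (hβ.1 j) (Real.exp_pos _).le
      calc L * (β j * Real.exp (-C l j / 2) * t j)
          = β j * Real.exp (-C l j / 2) * (L * t j) := by ring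
        _ ≤ β j * Real.exp (-C l j / 2) * s j := mul_le_mul_of_nonneg_left hsj hc
  have hsum_ub : ∀ l, ∑ j, β j * Real.exp (-C l j / 2) * s j
      ≤ M * ∑ j, β j * Real.exp (-C l j / 2) * t j := by
    intro l
    rw [Finset.mul_sum]
    exact Finset.sum_le_sum fun j _ => hterm_ub l j
  have hsum_lb : ∀ l, L * ∑ j, β j * Real.exp (-C l j / 2) * t j
      ≤ ∑ j, β j * Real.exp (-C l j / 2) * s j := by
    intro l
    rw [Finset.mul_sum]
    exact Finset.sum_le_sum fun j _ => hterm_lb l j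
  have hML1 : 1 ≤ M * L := by
    have hsL : s i2 = L * t i2 := by
      rw [hL]
      field_simp
      rw [mul_div_assoc, div_self (htpos i2).ne', mul_one]
    calc (1:ℝ) = s i2 * ∑ j, β j * Real.exp (-C i2 j / 2) * s j := (hs i2).symm
      _ ≤ s i2 * (M * ∑ j, β j * Real.exp (-C i2 j / 2) * t j) :=
          mul_le_mul_of_nonneg_left (hsum_ub i2) (hspos i2).le
      _ = M * L * (t i2 * ∑ j, β j * Real.exp (-C i2 j / 2) * t j) := by rw [hsL]; ring
      _ = M * L := by rw [ht i2, mul_one]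
  have h1ML : M * L ≤ 1 := by
    have hsM : s i1 = M * t i1 := by
      rw [hM]
      field_simp
      rw [mul_div_assoc, div_self (htpos i1).ne', mul_one]
    calc M * L = M * L * (t i1 * ∑ j, β j * Real.exp (-C i1 j / 2) * t j) := by
          rw [ht i1, mul_one]
      _ = s i1 * (L * ∑ j, β j * Real.exp (-C i1 j / 2) * t j) := by rw [hsM]; ring
      _ ≤ s i1 * ∑ j, β j * Real.exp (-C i1 j / 2) * s j :=
          mul_le_mul_of_nonneg_left (hsum_lb i1) (hspos i1).le
      _ = 1 := hs i1
  have hMLeq : M * L = 1 := le_antisymm h1ML hML1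
  have htne1 : t i1 ≠ 0 := (htpos i1).ne'
  have hsne1 : s i1 ≠ 0 := (hspos i1).ne'
  have hSs_eq : ∑ j, β j * Real.exp (-C i1 j / 2) * s j
      = L * ∑ j, β j * Real.exp (-C i1 j / 2) * t j := by
    have e1 : ∑ j, β j * Real.exp (-C i1 j / 2) * s j = 1 / s i1 :=
      eq_one_div_of_mul_eq_one_right (hs i1)
    have e2 : ∑ j, β j * Real.exp (-C i1 j / 2) * t j = 1 / t i1 :=
      eq_one_div_of_mul_eq_one_right (ht i1)
    have hkey : t i1 = L * s i1 := by
      rw [hM] at hMLeq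
      field_simp at hMLeq
      linarith [hMLeq]
    rw [e1, e2, hkey]
    have hLne : L ≠ 0 := hLpos.ne'
    field_simp
  have hsum_eq : ∑ j, L * (β j * Real.exp (-C i1 j / 2) * t j)
      = ∑ j, β j * Real.exp (-C i1 j / 2) * s j := by
    rw [← Finset.mul_sum]
    exact hSs_eq.symm
  have htermeq := (Finset.sum_eq_sum_iff_of_le (fun j _ => hterm_lb i1 j)).mp hsum_eq
  have hjeq : ∀ j, 0 < β j → s j = L * t j := by
    intro j hj
    have heq := htermeq j (Finset.mem_univ j)
    have hc : 0 < β j * Real.exp (-C i1 j / 2) := mul_pos hj (Real.exp_pos _)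
    have h0 : (β j * Real.exp (-C i1 j / 2)) * (s j - L * t j) = 0 := by
      linear_combination -heq
    rcases mul_eq_zero.mp h0 with h | h
    · exact absurd h hc.ne'
    · linarith [h]
  have hMeqL : M = L := by
    have hA := hjeq i1 (hβD i1 hi1D)
    have hsM : s i1 = M * t i1 := by
      rw [hM]
      field_simp
    exact mul_right_cancel₀ htne1 (by rw [← hsM, hA])
  have hM1 : M = 1 := by nlinarith [hMLeq, hMeqL, hMpos]
  have hfin := hjeq i hi
  rw [← hMeqL, hM1, one_mul] at hfin
  have : -g₁ i / 2 = -g₂ i / 2 := Real.exp_injective hfin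
  linarith
end BFY


/-- Generic Bregman / Fenchel-Young decomposition for the Sinkhorn negentropy:
`D_Ω(α, g-softmax(f)) = ℓ_Ω(α, f) + ⟨f - ∇Ω(g-softmax(f)), α - g-softmax(f)⟩`. -/
theorem bregman_fenchel_young_decomposition (d : ℕ) (hd : 1 ≤ d)
    (C : Matrix (Fin d) (Fin d) ℝ) (hCsym : C.IsSymm) (hCdiag : ∀ i, C i i = 0)
    (hK : (kernelK C).PosDef) (α : Fin d → ℝ) (hα : α ∈ simplexS d) (f : Fin d → ℝ) :
    DOmega C α (gsoftmax C f) = FYloss C α f +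
      ∑ i, (f i - gradOmega C (gsoftmax C f) i) * (α i - gsoftmax C f i) := by
  classical
  have hcont : Continuous fun b : Fin d → ℝ => Phi C b f := by
    unfold Phi
    exact continuous_finset_sum _ fun i _ => continuous_finset_sum _ fun j _ =>
      ((continuous_apply i).mul (continuous_apply j)).mul continuous_const
  have hexmin : ∃ a ∈ simplexS d, IsMinOn (fun β => Phi C β f) (simplexS d) a :=
    (isCompact_stdSimplex ℝ (Fin d)).exists_isMinOn ⟨α, hα⟩ hcont.continuousOn
  have hgs : gsoftmax C f = hexmin.choose := by
    simp only [gsoftmax]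
    rw [dif_pos hexmin]
  rw [hgs]
  set B := hexmin.choose with hB
  obtain ⟨hβmem, hβmin⟩ := hexmin.choose_spec
  rw [← hB] at hβmem hβmin
  set m := Phi C B f with hmdef
  have hmpos : 0 < m := BFY.phi_pos C f hβmem
  obtain ⟨g0, hg0pot, hg0k⟩ := BFY.pot_of_min C hCsym f hβmem hβmin
  have hexpot : ∃ g, IsSinkhornPotential C B g := ⟨g0, hg0pot⟩
  have hgo : gradOmega C B = hexpot.choose := by
    simp only [gradOmega]
    rw [dif_pos hexpot]
  have hgopot : IsSinkhornPotential C B (gradOmega C B) := by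
    rw [hgo]
    exact hexpot.choose_spec
  have hOmegaB : Omega C B = ∑ i, B i * gradOmega C B i :=
    BFY.omega_eq_inner C hCsym hβmem hgopot
  have hsum1 : ∑ i, B i * gradOmega C B i = ∑ i, B i * g0 i := by
    refine Finset.sum_congr rfl fun i _ => ?_
    rcases eq_or_lt_of_le (hβmem.1 i) with h | h
    · rw [← h, zero_mul, zero_mul]
    · rw [BFY.pot_unique C hβmem hgopot hg0pot h]
  have hsum2 : ∑ i, B i * g0 i = (∑ i, B i * f i) + Real.log m := by
    have e : ∀ i : Fin d, B i * g0 i = B i * f i + B i * Real.log m := by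
      intro i
      rcases eq_or_lt_of_le (hβmem.1 i) with h | h
      · rw [← h]; ring
      · rw [hg0k i h, ← hmdef]; ring
    rw [Finset.sum_congr rfl fun i _ => e i, Finset.sum_add_distrib, ← Finset.sum_mul,
      hβmem.2, one_mul]
  have hOmegaStar : OmegaStar C f = -Real.log m := by
    have hleast : IsLeast ((fun a => Phi C a f) '' simplexS d) m := by
      constructor
      · exact ⟨B, hβmem, rfl⟩
      · rintro y ⟨a, ha, rfl⟩
        exact (isMinOn_iff.mp hβmin) a ha
    rw [OmegaStar, hleast.csInf_eq]
  have esplit : ∑ i, (f i - gradOmega C B i) * (α i - B i)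
      = (∑ i, α i * f i) - (∑ i, B i * f i) - ∑ i, gradOmega C B i * (α i - B i) := by
    rw [← Finset.sum_sub_distrib, ← Finset.sum_sub_distrib]
    exact Finset.sum_congr rfl fun i _ => by ring
  rw [DOmega, FYloss, hOmegaStar, hOmegaB, hsum1, hsum2, esplit]
  ring
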